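/- If v is an endomorphism of V with v ∘ v = 0, then ker(v + v*) = ker v ∩ ker v*, and V decomposes as the orthogonal direct sum V = (ker v ∩ ker v*) ⊕ im v ⊕ im v*; in particular v + v* restricts to an automorphism of the orthogonal complement of ker v ∩ ker v*. -/

import Mathlib

/-- If `v` is an endomorphism of a finite-dimensional complex inner product space with
`v ∘ v = 0`, then `ker(v + v*) = ker v ∩ ker v*`, the space decomposes as the orthogonal
direct sum `(ker v ∩ ker v*) ⊕ im v ⊕ im v*` (the three summands are pairwise orthogonal
and span everything), and `v + v*` restricts to an automorphism of the orthogonal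
complement of `ker v ∩ ker v*`. -/
theorem hodge_decomposition_of_sq_zero (V : Type*) [NormedAddCommGroup V]
    [InnerProductSpace ℂ V] [FiniteDimensional ℂ V]
    (v : V →ₗ[ℂ] V) (hv : v ∘ₗ v = 0) :
    LinearMap.ker (v + LinearMap.adjoint v)
        = LinearMap.ker v ⊓ LinearMap.ker (LinearMap.adjoint v) ∧
    (LinearMap.ker v ⊓ LinearMap.ker (LinearMap.adjoint v)) ⊔ LinearMap.range v ⊔
        LinearMap.range (LinearMap.adjoint v) = ⊤ ∧
    (∀ x ∈ LinearMap.ker v ⊓ LinearMap.ker (LinearMap.adjoint v),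
        ∀ y ∈ LinearMap.range v, @inner ℂ V _ x y = 0) ∧
    (∀ x ∈ LinearMap.ker v ⊓ LinearMap.ker (LinearMap.adjoint v),
        ∀ y ∈ LinearMap.range (LinearMap.adjoint v), @inner ℂ V _ x y = 0) ∧
    (∀ x ∈ LinearMap.range v, ∀ y ∈ LinearMap.range (LinearMap.adjoint v),
        @inner ℂ V _ x y = 0) ∧
    ∃ hmap : ∀ x ∈ (LinearMap.ker v ⊓ LinearMap.ker (LinearMap.adjoint v))ᗮ,
        (v + LinearMap.adjoint v) x ∈ (LinearMap.ker v ⊓ LinearMap.ker (LinearMap.adjoint v))ᗮ,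
      Function.Bijective ((v + LinearMap.adjoint v).restrict hmap) := by
  set A := v + LinearMap.adjoint v with hAdef
  set K := LinearMap.ker v ⊓ LinearMap.ker (LinearMap.adjoint v) with hKdef
  have hvv : ∀ x : V, v (v x) = 0 := fun x => by
    have := congrFun (congrArg DFunLike.coe hv) x
    simpa using this
  -- ker A = K
  have hker : LinearMap.ker A = K := by
    apply le_antisymm
    · intro x hx
      have hx' : v x + LinearMap.adjoint v x = 0 := hx
      have hvx : LinearMap.adjoint v x = -(v x) := by
        rw [eq_neg_iff_add_eq_zero, add_comm]; exact hx'
      have h1 : @inner ℂ V _ (v x) (v x) = 0 := by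
        have : @inner ℂ V _ (v x) (v x) = -(@inner ℂ V _ (v x) (LinearMap.adjoint v x)) := by
          rw [hvx, inner_neg_right, neg_neg]
        rw [this, LinearMap.adjoint_inner_right, hvv x, inner_zero_left, neg_zero]
      have hvx0 : v x = 0 := inner_self_eq_zero.mp h1
      have hax0 : LinearMap.adjoint v x = 0 := by rw [hvx, hvx0, neg_zero]
      exact ⟨hvx0, hax0⟩
    · intro x hx
      have h1 : v x = 0 := hx.1
      have h2 : LinearMap.adjoint v x = 0 := hx.2
      show v x + LinearMap.adjoint v x = 0
      rw [h1, h2, add_zero]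
  -- orthogonality
  have hKv : ∀ x ∈ K, ∀ y ∈ LinearMap.range v, @inner ℂ V _ x y = 0 := by
    rintro x hx y ⟨z, rfl⟩
    have : @inner ℂ V _ x (v z) = @inner ℂ V _ (LinearMap.adjoint v x) z := by
      conv_lhs => rw [← LinearMap.adjoint_adjoint v]
      exact LinearMap.adjoint_inner_right _ _ _
    rw [this, hx.2, inner_zero_left]
  have hKva : ∀ x ∈ K, ∀ y ∈ LinearMap.range (LinearMap.adjoint v),
      @inner ℂ V _ x y = 0 := by
    rintro x hx y ⟨z, rfl⟩
    rw [LinearMap.adjoint_inner_right, hx.1, inner_zero_left]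
  have hvva : ∀ x ∈ LinearMap.range v, ∀ y ∈ LinearMap.range (LinearMap.adjoint v),
      @inner ℂ V _ x y = 0 := by
    rintro x ⟨a, rfl⟩ y ⟨b, rfl⟩
    rw [LinearMap.adjoint_inner_right, hvv a, inner_zero_left]
  -- range A = Kᗮ
  have hrle : LinearMap.range A ≤ Kᗮ := by
    rintro y ⟨z, rfl⟩
    rw [Submodule.mem_orthogonal]
    intro u hu
    show @inner ℂ V _ u (v z + LinearMap.adjoint v z) = 0
    rw [inner_add_right, hKv u hu _ ⟨z, rfl⟩, hKva u hu _ ⟨z, rfl⟩, add_zero]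
  have hdim : Module.finrank ℂ (LinearMap.range A) = Module.finrank ℂ Kᗮ := by
    have h1 := LinearMap.finrank_range_add_finrank_ker A
    have h2 := Submodule.finrank_add_finrank_orthogonal (K := K)
    rw [hker] at h1
    omega
  have hreq : LinearMap.range A = Kᗮ := Submodule.eq_of_le_of_finrank_eq hrle hdim
  -- spanning
  have htop : K ⊔ LinearMap.range v ⊔ LinearMap.range (LinearMap.adjoint v) = ⊤ := by
    rw [eq_top_iff]
    have hsup : K ⊔ Kᗮ = ⊤ := Submodule.sup_orthogonal_of_hasOrthogonalProjection
    rw [← hsup]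
    apply sup_le
    · exact le_trans le_sup_left le_sup_left
    · rw [← hreq]
      rintro y ⟨z, rfl⟩
      have : A z = v z + LinearMap.adjoint v z := rfl
      rw [this]
      exact Submodule.add_mem _
        (Submodule.mem_sup_left (Submodule.mem_sup_right (LinearMap.mem_range_self v z)))
        (Submodule.mem_sup_right (LinearMap.mem_range_self _ z))
  refine ⟨hker, htop, hKv, hKva, hvva, ?_⟩
  have hmap : ∀ x ∈ Kᗮ, A x ∈ Kᗮ := fun x _ => hreq ▸ LinearMap.mem_range_self A x
  refine ⟨hmap, ?_⟩
  have hinj : Function.Injective (A.restrict hmap) := by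
    rw [← LinearMap.ker_eq_bot]
    rw [Submodule.eq_bot_iff]
    rintro ⟨x, hx⟩ hx0
    have hAx : A x = 0 := by
      have := congrArg Subtype.val hx0
      simpa [LinearMap.restrict_apply] using this
    have hxK : x ∈ K := hker ▸ hAx
    have : x = 0 := by
      have hd := Submodule.orthogonal_disjoint K
      exact (Submodule.disjoint_def.mp hd) x hxK hx
    simp [this]
  exact ⟨hinj, (LinearMap.injective_iff_surjective).mp hinj⟩
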